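/- Under Assumptions A1 and A2, for every dual optimal λ* ∈ Λ*, the vector x defined by x_s = x_s^†(γ(s,λ*)) for each s is the unique optimal session-rate vector of the MP: there exists y ≥ 0 such that (x,y) is feasible for the MP with f(x,y) = f*, and every optimal solution (x',y') of the MP satisfies x' = x. -/

import Mathlib

open scoped BigOperators


/-- Separation lemma specialized to our situation. -/
lemma sep_aux {E : Type} [Fintype E] [DecidableEq E]
    (A : Set ((E → ℝ) × ℝ)) (hAconv : Convex ℝ A) (hAopen : IsOpen A)
    (hne : A.Nonempty)
    (K : ℝ) (hK : ((0 : E → ℝ), K) ∉ A)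
    (hup : ∀ a ∈ A, ∀ e : E, ∀ t : ℝ, 0 ≤ t →
      (a.1 + t • (Pi.single e 1 : E → ℝ), a.2) ∈ A)
    (hdown : ∀ a ∈ A, ∀ t : ℝ, 0 ≤ t → (a.1, a.2 - t) ∈ A) :
    ∃ (φ : E → ℝ) (k : ℝ), 0 ≤ k ∧ (∀ e, φ e ≤ 0) ∧
      ∀ a ∈ A, ∑ e, a.1 e * φ e + a.2 * k < K * k := by
  obtain ⟨f, hf⟩ := geometric_hahn_banach_open_point hAconv hAopen hK
  set φ : E → ℝ := fun e => f ((Pi.single e 1 : E → ℝ), (0 : ℝ)) with hφdef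
  set k : ℝ := f ((0 : E → ℝ), (1 : ℝ)) with hkdef
  have hdecomp : ∀ (u : E → ℝ) (r : ℝ),
      f (u, r) = ∑ e, u e * φ e + r * k := by
    intro u r
    have h1 : (u, r) = (∑ e, u e • ((Pi.single e 1 : E → ℝ), (0 : ℝ)))
        + r • ((0 : E → ℝ), (1 : ℝ)) := by
      rw [Prod.ext_iff]
      constructor
      · simp only [Prod.fst_sum, Prod.smul_fst, Prod.fst_add, smul_eq_mul]
        have : ∀ e : E, u e • (Pi.single e 1 : E → ℝ) = Pi.single e (u e) := by
          intro e
          rw [← Pi.single_smul]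
          simp
        simp only [this, Finset.univ_sum_single]
        simp
      · simp only [Prod.snd_sum, Prod.smul_snd, Prod.snd_add, smul_eq_mul]
        simp
    rw [h1]
    simp only [map_add, map_sum, map_smul, smul_eq_mul]; rfl
  obtain ⟨a₀, ha₀⟩ := hne
  have hKk : f ((0 : E → ℝ), K) = K * k := by
    rw [hdecomp]; simp
  have hlt : ∀ a ∈ A, f a < K * k := by
    intro a ha; rw [← hKk]; exact hf a ha
  have hray : ∀ a ∈ A, ∀ d : (E → ℝ) × ℝ, (∀ t : ℝ, 0 ≤ t → a + t • d ∈ A) →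
      f d ≤ 0 := by
    intro a ha d hd
    by_contra hpos
    push_neg at hpos
    have h0 : f a < K * k := hlt a ha
    have ht : (0 : ℝ) ≤ (K * k - f a) / f d := div_nonneg (by linarith) (le_of_lt hpos)
    have := hlt _ (hd _ ht)
    rw [map_add, map_smul, smul_eq_mul, div_mul_cancel₀ _ (ne_of_gt hpos)] at this
    linarith
  have hφle : ∀ e, φ e ≤ 0 := by
    intro e
    refine hray a₀ ha₀ ((Pi.single e 1 : E → ℝ), (0 : ℝ)) ?_
    intro t ht
    have h2 := hup a₀ ha₀ e t ht
    have : a₀ + t • ((Pi.single e 1 : E → ℝ), (0 : ℝ))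
        = (a₀.1 + t • (Pi.single e 1 : E → ℝ), a₀.2) := by
      rw [Prod.ext_iff]; constructor <;> simp
    rw [this]; exact h2
  have hkge : 0 ≤ k := by
    have h3 := hray a₀ ha₀ ((0 : E → ℝ), (-1 : ℝ)) ?_
    · have hneg : f ((0 : E → ℝ), (-1 : ℝ)) = -k := by
        rw [hdecomp]; simp
      linarith [hneg ▸ h3]
    · intro t ht
      have h4 := hdown a₀ ha₀ t ht
      have : a₀ + t • ((0 : E → ℝ), (-1 : ℝ)) = (a₀.1, a₀.2 - t) := by
        rw [Prod.ext_iff]; constructor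
        · simp
        · simp [sub_eq_add_neg]
      rw [this]; exact h4
  refine ⟨φ, k, hkge, hφle, ?_⟩
  intro a ha
  have := hlt a ha
  rwa [show a = (a.1, a.2) from rfl, hdecomp] at this


lemma comb_lt {A B a b ta tb : ℝ} (hA : A < a) (hB : B < b)
    (hta : 0 ≤ ta) (htb : 0 ≤ tb) (hab : ta + tb = 1) :
    ta * A + tb * B < ta * a + tb * b := by
  rcases hta.eq_or_lt with h | h
  · have : tb = 1 := by linarith
    subst this; rw [← h]; simpa using hB
  · have h1 : ta * A < ta * a := by exact mul_lt_mul_of_pos_left hA h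
    have h2 : tb * B ≤ tb * b := mul_le_mul_of_nonneg_left hB.le htb
    linarith

lemma dual_le_aux {S T E : Type} [Fintype S] [Fintype T] [Fintype E] [DecidableEq S] [DecidableEq E]
    (σ : T → S) (H : E → T → ℝ) (c : E → ℝ) (m M : S → ℝ)
    (U : S → ℝ → ℝ)
    (hUconc : ∀ s, ConcaveOn ℝ (Set.Icc (m s) (M s)) (U s))
    (D : Set ((S → ℝ) × (T → ℝ)))
    (hD : D = {p | (∀ t, 0 ≤ p.2 t) ∧
      (∀ s, p.1 s = ∑ t, if σ t = s then p.2 t else 0) ∧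
      (∀ s, p.1 s ∈ Set.Icc (m s) (M s))})
    (L : (S → ℝ) → (T → ℝ) → (E → ℝ) → ℝ)
    (hL : ∀ x y lam, L x y lam =
      ∑ s, U s (x s) + ∑ e, lam e * (c e - ∑ t, H e t * y t))
    (fStar : ℝ)
    (hub : ∀ p ∈ D, (∀ e, ∑ t, H e t * p.2 t ≤ c e) → ∑ s, U s (p.1 s) ≤ fStar)
    (θ : (E → ℝ) → ℝ)
    (hθ : ∀ lam : E → ℝ, IsGreatest {v | ∃ p ∈ D, v = L p.1 p.2 lam} (θ lam))
    (hslater : ∃ p ∈ D, ∀ e, ∑ t, H e t * p.2 t < c e) :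
    ∃ μ : E → ℝ, (∀ e, 0 ≤ μ e) ∧ θ μ ≤ fStar := by
  classical
  set A : Set ((E → ℝ) × ℝ) := {a | ∃ p ∈ D,
    (∀ e, ∑ t, H e t * p.2 t - c e < a.1 e) ∧ a.2 < ∑ s, U s (p.1 s)} with hAdef
  -- openness
  have hAopen : IsOpen A := by
    have hrw : A = ⋃ p ∈ D,
        ((⋂ e : E, {a : (E → ℝ) × ℝ | ∑ t, H e t * p.2 t - c e < a.1 e}) ∩
          {a : (E → ℝ) × ℝ | a.2 < ∑ s, U s (p.1 s)}) := by
      ext a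
      simp only [hAdef, Set.mem_setOf_eq, Set.mem_iUnion, Set.mem_inter_iff,
        Set.mem_iInter, exists_prop]
    rw [hrw]
    refine isOpen_biUnion fun p _ => IsOpen.inter (isOpen_iInter_of_finite fun e => ?_) ?_
    · exact isOpen_lt continuous_const ((continuous_apply e).comp continuous_fst)
    · exact isOpen_lt continuous_snd continuous_const
  -- D is convex (we only need the combination facts inline)
  have hAconv : Convex ℝ A := by
    rintro a ⟨p, hp, hpc, hpv⟩ b ⟨q, hq, hqc, hqv⟩ ta tb hta htb hab
    rw [hD] at hp hq
    obtain ⟨hp0, hpeq, hpI⟩ := hp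
    obtain ⟨hq0, hqeq, hqI⟩ := hq
    refine ⟨ta • p + tb • q, ?_, ?_, ?_⟩
    · rw [hD]
      refine ⟨fun t => ?_, fun s => ?_, fun s => ?_⟩
      · have : (ta • p + tb • q).2 t = ta * p.2 t + tb * q.2 t := rfl
        rw [this]
        have := hp0 t; have := hq0 t; positivity
      · have h1 : (ta • p + tb • q).1 s = ta * p.1 s + tb * q.1 s := rfl
        rw [h1, hpeq s, hqeq s, Finset.mul_sum, Finset.mul_sum,
          ← Finset.sum_add_distrib]
        refine Finset.sum_congr rfl fun t _ => ?_
        have h2 : (ta • p + tb • q).2 t = ta * p.2 t + tb * q.2 t := rfl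
        rw [h2]
        split_ifs <;> ring
      · have h1 : (ta • p + tb • q).1 s = ta * p.1 s + tb * q.1 s := rfl
        rw [h1]
        exact convex_Icc (m s) (M s) (hpI s) (hqI s) hta htb hab
    · intro e
      have h2 : (ta • p + tb • q).2 = ta • p.2 + tb • q.2 := rfl
      have hexp : ∑ t, H e t * (ta • p + tb • q).2 t
          = ta * (∑ t, H e t * p.2 t) + tb * (∑ t, H e t * q.2 t) := by
        rw [h2, Finset.mul_sum, Finset.mul_sum, ← Finset.sum_add_distrib]
        refine Finset.sum_congr rfl fun t _ => ?_
        simp only [Pi.add_apply, Pi.smul_apply, smul_eq_mul]; ring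
      have h3 : (ta • a + tb • b).1 e = ta * a.1 e + tb * b.1 e := rfl
      rw [hexp, h3]
      have h5 := comb_lt (hpc e) (hqc e) hta htb hab
      have hc' : ta * c e + tb * c e = c e := by rw [← add_mul, hab, one_mul]
      linarith
    · have h3 : (ta • a + tb • b).2 = ta * a.2 + tb * b.2 := rfl
      have h4 : ∀ s, ta * U s (p.1 s) + tb * U s (q.1 s)
          ≤ U s ((ta • p + tb • q).1 s) := by
        intro s
        have h1 : (ta • p + tb • q).1 s = ta • p.1 s + tb • q.1 s := rfl
        rw [h1]
        exact (hUconc s).2 (hpI s) (hqI s) hta htb hab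
      have h5 := Finset.sum_le_sum (fun s (_ : s ∈ Finset.univ) => h4 s)
      rw [h3]
      have h6 := comb_lt hpv hqv hta htb hab
      have h7 : ∑ s, (ta * U s (p.1 s) + tb * U s (q.1 s))
          = ta * (∑ s, U s (p.1 s)) + tb * (∑ s, U s (q.1 s)) := by
        rw [Finset.mul_sum, Finset.mul_sum, ← Finset.sum_add_distrib]
      linarith [h5, h7 ▸ h5]
  -- the point (0, fStar) is not in A
  have hKnot : ((0 : E → ℝ), fStar) ∉ A := by
    rintro ⟨p, hp, hpc, hpv⟩
    have hfeas : ∀ e, ∑ t, H e t * p.2 t ≤ c e := by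
      intro e; have := hpc e; simp only [Pi.zero_apply] at this; linarith
    exact absurd hpv (not_lt.2 (hub p hp hfeas))
  -- A nonempty
  obtain ⟨pbar, hpbar, hpbarlt⟩ := hslater
  have hne : A.Nonempty := by
    refine ⟨(fun e => ∑ t, H e t * pbar.2 t - c e + 1, ∑ s, U s (pbar.1 s) - 1),
      pbar, hpbar, fun e => by simp, by simp⟩
  -- ray closure
  have hup : ∀ a ∈ A, ∀ e : E, ∀ t : ℝ, 0 ≤ t →
      (a.1 + t • (Pi.single e 1 : E → ℝ), a.2) ∈ A := by
    rintro a ⟨p, hp, hpc, hpv⟩ e t ht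
    refine ⟨p, hp, fun e' => ?_, hpv⟩
    show ∑ t', H e' t' * p.2 t' - c e' < a.1 e' + t * (Pi.single e 1 : E → ℝ) e'
    have h2 : (0:ℝ) ≤ (Pi.single e 1 : E → ℝ) e' := by
      rw [Pi.single_apply]; split_ifs <;> norm_num
    nlinarith [hpc e']
  have hdown : ∀ a ∈ A, ∀ t : ℝ, 0 ≤ t → (a.1, a.2 - t) ∈ A := by
    rintro a ⟨p, hp, hpc, hpv⟩ t ht
    exact ⟨p, hp, hpc, show a.2 - t < _ by linarith⟩
  obtain ⟨φ, k, hk0, hφ, hsep⟩ := sep_aux A hAconv hAopen hne fStar hKnot hup hdown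
  -- k is positive thanks to Slater
  have hkpos : 0 < k := by
    rcases hk0.eq_or_lt with h | h
    · exfalso
      have haA : ((fun e => (∑ t, H e t * pbar.2 t - c e) / 2,
          ∑ s, U s (pbar.1 s) - 1) : (E → ℝ) × ℝ) ∈ A := by
        refine ⟨pbar, hpbar, fun e => ?_, by simp⟩
        have := hpbarlt e; simp only []; linarith
      have := hsep _ haA
      rw [← h] at this
      simp only [mul_zero, add_zero] at this
      have hnn : (0:ℝ) ≤ ∑ e, (∑ t, H e t * pbar.2 t - c e) / 2 * φ e := by
        refine Finset.sum_nonneg fun e _ => ?_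
        have h1 := hpbarlt e
        have h2 := mul_nonneg (by linarith : (0:ℝ) ≤ -((∑ t, H e t * pbar.2 t - c e) / 2))
          (by linarith [hφ e] : (0:ℝ) ≤ -φ e)
        nlinarith [h2]
      linarith
    · exact h
  refine ⟨fun e => -φ e / k, fun e => div_nonneg (by linarith [hφ e]) hk0, ?_⟩
  obtain ⟨q, hqD, hθq⟩ := (hθ (fun e => -φ e / k)).1
  set g : E → ℝ := fun e => ∑ t, H e t * q.2 t - c e with hg
  set v : ℝ := ∑ s, U s (q.1 s) with hv
  have hCd : ∀ ε : ℝ, 0 < ε →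
      (∑ e, g e * φ e + v * k) + ε * (∑ e, φ e - k) < fStar * k := by
    intro ε hε
    have hmem : ((fun e => g e + ε, v - ε) : (E → ℝ) × ℝ) ∈ A :=
      ⟨q, hqD, fun e => show ∑ t, H e t * q.2 t - c e < g e + ε by simp only [hg]; linarith,
        show v - ε < ∑ s, U s (q.1 s) by rw [hv]; linarith⟩
    have := hsep _ hmem
    have hexp : ∑ e, (g e + ε) * φ e = ∑ e, g e * φ e + ε * ∑ e, φ e := by
      rw [Finset.mul_sum, ← Finset.sum_add_distrib]
      exact Finset.sum_congr rfl fun e _ => by ring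
    simp only [] at this
    rw [hexp] at this
    nlinarith [this]
  have hC : ∑ e, g e * φ e + v * k ≤ fStar * k := by
    by_contra hgt
    push_neg at hgt
    set d : ℝ := ∑ e, φ e - k with hd
    rcases le_or_gt 0 d with hdle | hdlt
    · have := hCd 1 one_pos; nlinarith
    · set ε : ℝ := (∑ e, g e * φ e + v * k - fStar * k) / (-2 * d) with hε
      have hεpos : 0 < ε := div_pos (by linarith) (by linarith)
      have h1 := hCd ε hεpos
      have hdne : d ≠ 0 := ne_of_lt hdlt
      have h2 : ε * d = -((∑ e, g e * φ e + v * k - fStar * k) / 2) := by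
        rw [hε]; field_simp
      rw [h2] at h1; linarith
  -- conclude
  rw [hθq, hL]
  have h3 : ∑ e, (-φ e / k) * (c e - ∑ t, H e t * q.2 t) = (∑ e, g e * φ e) / k := by
    rw [Finset.sum_div]
    refine Finset.sum_congr rfl fun e _ => ?_
    simp only [hg]
    field_simp
    ring
  rw [show (∑ s, U s (q.1 s)) = v from rfl]
  rw [h3]
  have h4 : (∑ e, g e * φ e) / k ≤ fStar - v := by
    rw [div_le_iff₀ hkpos]; nlinarith
  linarith

/-- under A1 and A2, for every dual optimal λ* the vector
x_s = x_s†(γ(s,λ*)) is the unique optimal session-rate vector of the MP. -/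
theorem primal_recovery_from_dual_optimum
    {S T E : Type} [Fintype S] [Fintype T] [Fintype E]
    [Nonempty S] [Nonempty T] [Nonempty E] [DecidableEq S] [DecidableEq T]
    (σ : T → S) (hσ : Function.Surjective σ)
    (H : E → T → ℝ) (hH : ∀ e t, H e t = 0 ∨ H e t = 1)
    (c : E → ℝ) (hc : ∀ e, 0 < c e)
    (m M : S → ℝ) (hm : ∀ s, 0 ≤ m s) (hmM : ∀ s, m s < M s)
    (U : S → ℝ → ℝ)
    -- Assumption A1
    (hUmono : ∀ s, MonotoneOn (U s) (Set.Icc (m s) (M s)))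
    (hUconc : ∀ s, StrictConcaveOn ℝ (Set.Icc (m s) (M s)) (U s))
    (hUdiff : ∀ s, ContDiffOn ℝ 1 (U s) (Set.Icc (m s) (M s)))
    -- the domain D
    (D : Set ((S → ℝ) × (T → ℝ)))
    (hD : D = {p | (∀ t, 0 ≤ p.2 t) ∧
      (∀ s, p.1 s = ∑ t, if σ t = s then p.2 t else 0) ∧
      (∀ s, p.1 s ∈ Set.Icc (m s) (M s))})
    -- the Lagrangian
    (L : (S → ℝ) → (T → ℝ) → (E → ℝ) → ℝ)
    (hL : ∀ x y lam, L x y lam =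
      ∑ s, U s (x s) + ∑ e, lam e * (c e - ∑ t, H e t * y t))
    -- the optimal value of the master problem
    (fStar : ℝ)
    (hfStar : IsGreatest {v | ∃ p ∈ D, (∀ e, ∑ t, H e t * p.2 t ≤ c e) ∧
      v = ∑ s, U s (p.1 s)} fStar)
    -- the dual function
    (θ : (E → ℝ) → ℝ)
    (hθ : ∀ lam : E → ℝ, IsGreatest {v | ∃ p ∈ D, v = L p.1 p.2 lam} (θ lam))
    -- Assumption A2 (Slater)
    (hslater : ∃ p ∈ D, ∀ e, ∑ t, H e t * p.2 t < c e)
    -- the minimum tree cost γ(s, λ)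
    (γ : S → (E → ℝ) → ℝ)
    (hγ : ∀ s lam, IsLeast {w | ∃ t, σ t = s ∧ w = ∑ e, H e t * lam e} (γ s lam))
    -- x_s†(w) : the unique maximizer of x ↦ U_s(x) - w·x over [m_s, M_s]
    (xdag : S → ℝ → ℝ)
    (hxdag : ∀ (s : S) (w : ℝ), xdag s w ∈ Set.Icc (m s) (M s) ∧
      (∀ z ∈ Set.Icc (m s) (M s), U s z - w * z ≤ U s (xdag s w) - w * xdag s w) ∧
      (∀ z ∈ Set.Icc (m s) (M s),
        U s z - w * z = U s (xdag s w) - w * xdag s w → z = xdag s w))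
    -- λ* is a dual optimal solution, i.e. a member of Λ*
    (lamStar : E → ℝ)
    (hlamStar : (∀ e, 0 ≤ lamStar e) ∧
      ∀ μ : E → ℝ, (∀ e, 0 ≤ μ e) → θ lamStar ≤ θ μ)
    -- the candidate optimal session-rate vector
    (x : S → ℝ) (hx : ∀ s, x s = xdag s (γ s lamStar)) :
    (∃ y : T → ℝ, (x, y) ∈ D ∧ (∀ e, ∑ t, H e t * y t ≤ c e) ∧
      ∑ s, U s (x s) = fStar) ∧
    (∀ p ∈ D, (∀ e, ∑ t, H e t * p.2 t ≤ c e) →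
      ∑ s, U s (p.1 s) = fStar → p.1 = x) := by
  classical
  -- weak duality
  have hweak : ∀ μ : E → ℝ, (∀ e, 0 ≤ μ e) → fStar ≤ θ μ := by
    intro μ hμ
    obtain ⟨p, hpD, hpfeas, hpval⟩ := hfStar.1
    have h1 : L p.1 p.2 μ ∈ {v | ∃ p ∈ D, v = L p.1 p.2 μ} := ⟨p, hpD, rfl⟩
    have h2 := (hθ μ).2 h1
    have h3 : 0 ≤ ∑ e, μ e * (c e - ∑ t, H e t * p.2 t) :=
      Finset.sum_nonneg fun e _ => mul_nonneg (hμ e) (by linarith [hpfeas e])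
    rw [hL] at h2
    rw [hpval]
    linarith
  -- strong duality
  have hub : ∀ p ∈ D, (∀ e, ∑ t, H e t * p.2 t ≤ c e) → ∑ s, U s (p.1 s) ≤ fStar :=
    fun p hp hf => hfStar.2 ⟨p, hp, hf, rfl⟩
  obtain ⟨μ, hμ0, hμle⟩ := dual_le_aux σ H c m M U (fun s => (hUconc s).concaveOn)
    D hD L hL fStar hub θ hθ hslater
  have hθeq : θ lamStar = fStar :=
    le_antisymm (le_trans (hlamStar.2 μ hμ0) hμle) (hweak lamStar hlamStar.1)
  -- minimum-cost trees
  have hts : ∀ s, ∃ t, σ t = s ∧ γ s lamStar = ∑ e, H e t * lamStar e :=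
    fun s => (hγ s lamStar).1
  choose ts hts1 hts2 using hts
  have hcost_ge : ∀ t, γ (σ t) lamStar ≤ ∑ e, H e t * lamStar e :=
    fun t => (hγ (σ t) lamStar).2 ⟨t, rfl, rfl⟩
  -- rewriting the Lagrangian
  have hLform : ∀ (xv : S → ℝ) (yv : T → ℝ), L xv yv lamStar =
      (∑ e, lamStar e * c e) + ∑ s, U s (xv s)
        - ∑ t, (∑ e, H e t * lamStar e) * yv t := by
    intro xv yv
    rw [hL]
    have hswap : ∑ e, lamStar e * (∑ t, H e t * yv t)
        = ∑ t, (∑ e, H e t * lamStar e) * yv t := by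
      simp_rw [Finset.mul_sum, Finset.sum_mul]
      rw [Finset.sum_comm]
      exact Finset.sum_congr rfl fun t _ => Finset.sum_congr rfl fun e _ => by ring
    have h1 : ∑ e, lamStar e * (c e - ∑ t, H e t * yv t)
        = ∑ e, lamStar e * c e - ∑ e, lamStar e * (∑ t, H e t * yv t) := by
      simp_rw [mul_sub, Finset.sum_sub_distrib]
    rw [h1, hswap]; ring
  -- cost of trees lower bound on D
  have hATx : ∀ p ∈ D, ∑ t, γ (σ t) lamStar * p.2 t = ∑ s, γ s lamStar * p.1 s := by
    intro p hp
    rw [hD] at hp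
    obtain ⟨hy0, hxy, hIcc⟩ := hp
    calc ∑ t, γ (σ t) lamStar * p.2 t
        = ∑ t, ∑ s, (if σ t = s then γ s lamStar * p.2 t else 0) := by
          refine Finset.sum_congr rfl fun t _ => ?_
          rw [Finset.sum_ite_eq]
          simp
      _ = ∑ s, ∑ t, (if σ t = s then γ s lamStar * p.2 t else 0) := Finset.sum_comm
      _ = ∑ s, γ s lamStar * p.1 s := by
          refine Finset.sum_congr rfl fun s _ => ?_
          rw [hxy s, Finset.mul_sum]
          exact Finset.sum_congr rfl fun t _ => by split_ifs <;> ring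
  have hLle : ∀ p ∈ D, L p.1 p.2 lamStar ≤
      (∑ e, lamStar e * c e) + ∑ s, (U s (p.1 s) - γ s lamStar * p.1 s) := by
    intro p hp
    have hy0 : ∀ t, 0 ≤ p.2 t := by rw [hD] at hp; exact hp.1
    have h1 : ∑ t, γ (σ t) lamStar * p.2 t ≤ ∑ t, (∑ e, H e t * lamStar e) * p.2 t :=
      Finset.sum_le_sum fun t _ => mul_le_mul_of_nonneg_right (hcost_ge t) (hy0 t)
    have h2 := hATx p hp
    rw [hLform, Finset.sum_sub_distrib]
    linarith
  -- the candidate point (x, ystar)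
  set ystar : T → ℝ := fun t => ∑ s, if ts s = t then x s else 0 with hystar
  have hx_mem : ∀ s, x s ∈ Set.Icc (m s) (M s) := fun s => hx s ▸ (hxdag s _).1
  have hx0 : ∀ s, 0 ≤ x s := fun s => le_trans (hm s) (hx_mem s).1
  have hystar0 : ∀ t, 0 ≤ ystar t := fun t =>
    Finset.sum_nonneg fun s _ => by split_ifs; exacts [hx0 s, le_rfl]
  have hxys : ∀ s, x s = ∑ t, if σ t = s then ystar t else 0 := by
    intro s
    symm
    calc ∑ t, (if σ t = s then ystar t else 0)
        = ∑ t, ∑ s', (if ts s' = t then (if σ t = s then x s' else 0) else 0) := by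
          refine Finset.sum_congr rfl fun t _ => ?_
          by_cases h : σ t = s
          · simp only [h, if_true, hystar]
          · simp [h]
      _ = ∑ s', ∑ t, (if ts s' = t then (if σ t = s then x s' else 0) else 0) :=
          Finset.sum_comm
      _ = ∑ s', (if σ (ts s') = s then x s' else 0) := by
          refine Finset.sum_congr rfl fun s' _ => ?_
          rw [Finset.sum_ite_eq]
          simp
      _ = x s := by
          simp only [hts1]
          rw [Finset.sum_ite_eq']
          simp
  have hystarD : (x, ystar) ∈ D := by
    rw [hD]
    exact ⟨hystar0, hxys, hx_mem⟩
  have hcost_ystar : ∑ t, (∑ e, H e t * lamStar e) * ystar t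
      = ∑ s, γ s lamStar * x s := by
    calc ∑ t, (∑ e, H e t * lamStar e) * ystar t
        = ∑ t, ∑ s', (if ts s' = t then (∑ e, H e t * lamStar e) * x s' else 0) := by
          refine Finset.sum_congr rfl fun t _ => ?_
          rw [hystar, Finset.mul_sum]
          exact Finset.sum_congr rfl fun s' _ => by split_ifs <;> ring
      _ = ∑ s', ∑ t, (if ts s' = t then (∑ e, H e t * lamStar e) * x s' else 0) :=
          Finset.sum_comm
      _ = ∑ s', (∑ e, H e (ts s') * lamStar e) * x s' := by
          refine Finset.sum_congr rfl fun s' _ => ?_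
          rw [Finset.sum_ite_eq]
          simp
      _ = ∑ s', γ s' lamStar * x s' := by
          refine Finset.sum_congr rfl fun s' _ => ?_
          rw [← hts2 s']
  have hB : L x ystar lamStar
      = (∑ e, lamStar e * c e) + ∑ s, (U s (x s) - γ s lamStar * x s) := by
    rw [hLform, hcost_ystar, Finset.sum_sub_distrib]
    ring
  have hθB : (∑ e, lamStar e * c e) + ∑ s, (U s (x s) - γ s lamStar * x s)
      ≤ θ lamStar := by
    rw [← hB]
    exact (hθ lamStar).2 ⟨(x, ystar), hystarD, rfl⟩
  -- core claim
  have hcore : ∀ p ∈ D, (∀ e, ∑ t, H e t * p.2 t ≤ c e) →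
      ∑ s, U s (p.1 s) = fStar → p.1 = x := by
    intro p hpD hfeas hval
    have hIcc : ∀ s, p.1 s ∈ Set.Icc (m s) (M s) := by rw [hD] at hpD; exact hpD.2.2
    have h1 : fStar ≤ L p.1 p.2 lamStar := by
      rw [hL]
      have h3 : 0 ≤ ∑ e, lamStar e * (c e - ∑ t, H e t * p.2 t) :=
        Finset.sum_nonneg fun e _ =>
          mul_nonneg (hlamStar.1 e) (by linarith [hfeas e])
      linarith [hval]
    have h2 : L p.1 p.2 lamStar ≤ θ lamStar := (hθ lamStar).2 ⟨p, hpD, rfl⟩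
    have h3 := hLle p hpD
    have hterm : ∀ s ∈ Finset.univ, U s (p.1 s) - γ s lamStar * p.1 s
        ≤ U s (x s) - γ s lamStar * x s := by
      intro s _
      have := (hxdag s (γ s lamStar)).2.1 (p.1 s) (hIcc s)
      rw [hx s]
      exact this
    have h4 := Finset.sum_le_sum hterm
    have heq : ∑ s, (U s (p.1 s) - γ s lamStar * p.1 s)
        = ∑ s, (U s (x s) - γ s lamStar * x s) := by
      have := hθeq ▸ hθB
      linarith
    have hpt := (Finset.sum_eq_sum_iff_of_le hterm).1 heq
    funext s
    have h5 := hpt s (Finset.mem_univ s)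
    rw [hx s] at h5 ⊢
    exact (hxdag s (γ s lamStar)).2.2 (p.1 s) (hIcc s) h5
  constructor
  · obtain ⟨p, hpD, hfeas, hval⟩ := hfStar.1
    have hpx := hcore p hpD hfeas hval.symm
    refine ⟨p.2, ?_, hfeas, by rw [← hpx, ← hval]⟩
    rw [← hpx]
    exact hpD
  · exact hcore
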